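/- arXiv:2410.14188 — 3 statements merged into one kernel-verified Lean document; each statement's English description precedes it below -/
import Mathlib

section
/- For the free group F_S on a set S, a ring R, and homomorphisms h_1, …, h_n : F_S → R, the letter-braiding function I_{[h_1|⋯|h_n]} : R[F_S] → R satisfies I_{[h_1|⋯|h_n]}((s_1-1)(s_2-1)⋯(s_k-1)) = h_1(s_1)⋯h_n(s_n) if k = n, and 0 if k ≠ n, for any generators s_1, …, s_k ∈ S. -/
open scoped TensorProduct DirectSum

/-- The value of the functional `h : S → R` on a signed letter: `h s` on `s ∈ S`
and `-(h s)` on `s⁻¹` (as dictated by `h` extending to a homomorphism `F_S → R`),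
as a linear map in `h`. -/
noncomputable def letterEval (R : Type*) [CommRing R] {S : Type*} (p : S × Bool) :
    (S → R) →ₗ[R] R :=
  if p.2 then LinearMap.proj p.1 else -(LinearMap.proj p.1)

/-- The admissibility condition on a tuple of indices `i₁ ≤ … ≤ iₙ` into a word `L`:
consecutive indices satisfy `iⱼ <_w i_{j+1}`, which is strict `<` if the letter at `iⱼ`
is positive and `≤` if it is an inverse letter. -/
def Admissible {S : Type*} (L : List (S × Bool)) {n : ℕ} (ι : Fin n → Fin L.length) : Prop :=
  ∀ j i : Fin n, (i : ℕ) = (j : ℕ) + 1 →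
    (if (L.get (ι j)).2 then ι j < ι i else ι j ≤ ι i)

open Classical in
/-- The letter-braiding function of a pure tensor `[h₁|⋯|hₙ]` of functionals on
the free group `F_S`, computed on the reduced word of `w`:
`I(w) = Σ_{i₁ <_w ⋯ <_w iₙ} h₁(s_{i₁}) ⋯ hₙ(s_{iₙ})`. -/
noncomputable def lbPure {R S : Type*} [CommRing R] [DecidableEq S] {n : ℕ}
    (hs : Fin n → S → R) (w : FreeGroup S) : R :=
  ∑ ι ∈ Finset.univ.filter
      (fun ι : Fin n → Fin w.toWord.length => Admissible w.toWord ι),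
    ∏ j : Fin n, letterEval R (w.toWord.get (ι j)) (hs j)

open Classical in
/-- The letter-braiding multilinear map: `(h₁, …, hₙ) ↦ I_{[h₁|⋯|hₙ]}`. -/
noncomputable def lbMulti (R S : Type*) [CommRing R] [DecidableEq S] (n : ℕ) :
    MultilinearMap R (fun _ : Fin n => (S → R)) (FreeGroup S → R) :=
  MultilinearMap.pi fun w =>
    ∑ ι ∈ Finset.univ.filter
        (fun ι : Fin n → Fin w.toWord.length => Admissible w.toWord ι),
      (MultilinearMap.mkPiAlgebra R (Fin n) R).compLinearMap
        (fun j => letterEval R (w.toWord.get (ι j)))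

/-- The letter-braiding linear map on the tensor algebra `T(R^S) = ⊕ₙ (R^S)^{⊗n}`,
sending a tensor `T` to its letter-braiding function `I_T : F_S → R`. -/
noncomputable def LB (R S : Type*) [CommRing R] [DecidableEq S] :
    (⨁ n : ℕ, ⨂[R]^n (S → R)) →ₗ[R] (FreeGroup S → R) :=
  DirectSum.toModule R ℕ _ fun n => PiTensorProduct.lift (lbMulti R S n)

/-- The `R`-linear extension of a function on `F_S` to the group ring `R[F_S]`. -/
noncomputable def linExt {R S : Type*} [CommRing R] (f : FreeGroup S → R) :
    MonoidAlgebra R (FreeGroup S) →ₗ[R] R :=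
  Finsupp.linearCombination R f ∘ₗ (MonoidAlgebra.coeffLinearEquiv R).toLinearMap
set_option linter.unusedSectionVars false

namespace LBAux

variable {R S : Type*} [CommRing R] [DecidableEq S]

/-- the free group element given by a positive word -/
def pw (l : List S) : FreeGroup S := FreeGroup.mk (l.map fun s => (s, true))

lemma reduce_pos (l : List S) :
    FreeGroup.reduce (l.map fun s => (s, true)) = l.map fun s => (s, true) := by
  induction l with
  | nil => rfl
  | cons a l ih =>
    rw [List.map_cons, FreeGroup.reduce.cons, ih]
    cases h : (l.map fun s => (s, true)) with
    | nil => rfl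
    | cons p L =>
      have hp : p.2 = true := by
        have := List.mem_map.1 (h ▸ (List.mem_cons_self (a := p) (l := L)))
        obtain ⟨s, -, rfl⟩ := this
        rfl
      simp [hp]

lemma toWord_pw (l : List S) : (pw l).toWord = l.map fun s => (s, true) := by
  rw [pw, FreeGroup.toWord_mk, reduce_pos]

lemma pw_nil : (pw ([] : List S)) = 1 := by rw [pw, List.map_nil, ← FreeGroup.one_eq_mk]

lemma of_mul_pw (a : S) (l : List S) : FreeGroup.of a * pw l = pw (a :: l) := by
  rw [pw, pw, List.map_cons, FreeGroup.of, FreeGroup.mul_mk]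
  rfl

/-- recursive letter braiding on positive words -/
def brd : (n : ℕ) → (Fin n → S → R) → List S → R
  | 0, _, _ => 1
  | _ + 1, _, [] => 0
  | n + 1, hs, a :: l => brd (n + 1) hs l + hs 0 a * brd n (fun j => hs j.succ) l
  termination_by n _ l => (n, l.length)

lemma brd_zero (hs : Fin 0 → S → R) (l : List S) : brd 0 hs l = 1 := by
  cases l <;> simp [brd]

lemma brd_succ_nil {n : ℕ} (hs : Fin (n + 1) → S → R) : brd (n + 1) hs [] = (0 : R) := by
  simp [brd]

lemma brd_succ_cons {n : ℕ} (hs : Fin (n + 1) → S → R) (a : S) (l : List S) :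
    brd (n + 1) hs (a :: l) =
      brd (n + 1) hs l + hs 0 a * brd n (fun j => hs j.succ) l := by
  simp [brd]

/-- strictified admissibility -/
def AdmS {n m : ℕ} (ι : Fin n → Fin m) : Prop :=
  ∀ j i : Fin n, (i : ℕ) = (j : ℕ) + 1 → ι j < ι i

lemma adm_iff {L : List (S × Bool)} (hpos : ∀ p ∈ L, p.2 = true) {n : ℕ}
    (ι : Fin n → Fin L.length) : Admissible L ι ↔ AdmS ι := by
  unfold Admissible AdmS
  refine forall_congr' fun j => forall_congr' fun i => imp_congr Iff.rfl ?_
  rw [if_pos (hpos _ (List.get_mem L _))]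

lemma admS_strictMono {n m : ℕ} {ι : Fin (n + 1) → Fin m} (h : AdmS ι) : StrictMono ι := by
  rw [Fin.strictMono_iff_lt_succ]
  intro i
  exact h (Fin.castSucc i) i.succ (by simp)

lemma letterEval_pos (x : S) (h : S → R) : letterEval R (x, true) h = h x := by
  simp [letterEval]

open Classical in
lemma admS_sum : ∀ (L : List (S × Bool)), (∀ p ∈ L, p.2 = true) →
    ∀ (n : ℕ) (hs : Fin n → S → R),
    ∑ ι ∈ Finset.univ.filter (fun ι : Fin n → Fin L.length => AdmS ι),
      ∏ j, letterEval R (L.get (ι j)) (hs j) = brd n hs (L.map Prod.fst)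
  | [], hpos, 0, hs => by
    have hA : ∀ ι : Fin 0 → Fin ([] : List (S × Bool)).length, AdmS ι :=
      fun ι j i h => j.elim0
    rw [Finset.filter_true_of_mem fun ι _ => hA ι]
    simp [brd_zero]
  | [], hpos, n + 1, hs => by
    haveI : IsEmpty (Fin (n + 1) → Fin ([] : List (S × Bool)).length) :=
      ⟨fun f => (f 0).elim0⟩
    rw [Finset.univ_eq_empty]
    simp [brd_succ_nil]
  | (a, b) :: L', hpos, 0, hs => by
    have hA : ∀ ι : Fin 0 → Fin ((a, b) :: L').length, AdmS ι := fun ι j i h => j.elim0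
    rw [Finset.filter_true_of_mem fun ι _ => hA ι]
    simp [brd_zero]
  | (a, b) :: L', hpos, n + 1, hs => by
    have hb : b = true := hpos (a, b) List.mem_cons_self
    subst hb
    have hpos' : ∀ p ∈ L', p.2 = true := fun p hp => hpos p (List.mem_cons_of_mem _ hp)
    have hget : ∀ p : Fin L'.length, ((a, true) :: L').get p.succ = L'.get p := by
      intro p; simp [List.get_eq_getElem]
    show ∑ ι ∈ Finset.univ.filter (fun ι : Fin (n + 1) → Fin (L'.length + 1) => AdmS ι),
        ∏ j, letterEval R (((a, true) :: L').get (ι j)) (hs j)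
      = brd (n + 1) hs (((a, true) :: L').map Prod.fst)
    rw [← Finset.sum_filter_add_sum_filter_not
      (Finset.univ.filter (fun ι : Fin (n + 1) → Fin (L'.length + 1) => AdmS ι))
      (fun ι => ι 0 = 0)]
    have key1 : ∀ ι : Fin (n + 1) → Fin (L'.length + 1),
        ι ∈ (Finset.univ.filter (fun ι : Fin (n + 1) → Fin (L'.length + 1) => AdmS ι)).filter
          (fun ι => ι 0 = 0) → ∀ j : Fin n, ι j.succ ≠ 0 := by
      intro ι hι j
      rw [Finset.mem_filter, Finset.mem_filter] at hι
      obtain ⟨⟨-, hadm⟩, h0⟩ := hι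
      have := (admS_strictMono hadm) (Fin.succ_pos j)
      rw [h0] at this
      exact Fin.pos_iff_ne_zero.1 this
    have key2 : ∀ ι : Fin (n + 1) → Fin (L'.length + 1),
        ι ∈ (Finset.univ.filter (fun ι : Fin (n + 1) → Fin (L'.length + 1) => AdmS ι)).filter
          (fun ι => ¬ι 0 = 0) → ∀ j : Fin (n + 1), ι j ≠ 0 := by
      intro ι hι j hz
      rw [Finset.mem_filter, Finset.mem_filter] at hι
      obtain ⟨⟨-, hadm⟩, h0⟩ := hι
      exact h0 (Fin.le_zero_iff.1 (hz ▸ (admS_strictMono hadm).monotone (Fin.zero_le j)))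
    have hterm1 :
        ∑ ι ∈ (Finset.univ.filter
            (fun ι : Fin (n + 1) → Fin (L'.length + 1) => AdmS ι)).filter
            (fun ι => ι 0 = 0),
          ∏ j, letterEval R (((a, true) :: L').get (ι j)) (hs j)
        = ∑ κ ∈ Finset.univ.filter (fun κ : Fin n → Fin L'.length => AdmS κ),
            (hs 0 a * ∏ j, letterEval R (L'.get (κ j)) (hs j.succ)) := by
      refine Finset.sum_bij'
        (i := fun ι hι => fun j => (ι j.succ).pred (key1 ι hι j))
        (j := fun κ _ => Fin.cons 0 (Fin.succ ∘ κ)) ?_ ?_ ?_ ?_ ?_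
      · -- forward mem
        intro ι hι
        have hι' := hι
        rw [Finset.mem_filter, Finset.mem_filter] at hι'
        obtain ⟨⟨-, hadm⟩, h0⟩ := hι'
        rw [Finset.mem_filter]
        refine ⟨Finset.mem_univ _, fun j i hji => ?_⟩
        rw [Fin.pred_lt_pred_iff]
        exact hadm j.succ i.succ (by simpa using hji)
      · -- backward mem
        intro κ hκ
        rw [Finset.mem_filter] at hκ
        obtain ⟨-, hadm⟩ := hκ
        rw [Finset.mem_filter, Finset.mem_filter]
        refine ⟨⟨Finset.mem_univ _, fun j i hji => ?_⟩, by simp⟩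
        have hi0 : i ≠ 0 := by
          intro h; subst h; simp at hji
        obtain ⟨i', rfl⟩ := Fin.eq_succ_of_ne_zero hi0
        by_cases hj0 : j = 0
        · subst hj0
          simp only [Fin.cons_zero, Fin.cons_succ]
          exact Fin.succ_pos _
        · obtain ⟨j', rfl⟩ := Fin.eq_succ_of_ne_zero hj0
          simp only [Fin.cons_succ, Function.comp_apply]
          refine Fin.succ_lt_succ_iff.2 (hadm j' i' ?_)
          simp only [Fin.val_succ] at hji ⊢
          omega
      · -- left inverse
        intro ι hι
        have hι' := hι
        rw [Finset.mem_filter, Finset.mem_filter] at hι'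
        obtain ⟨⟨-, hadm⟩, h0⟩ := hι'
        funext x
        refine Fin.cases ?_ ?_ x
        · simp only [Fin.cons_zero, h0]
        · intro p
          simp only [Fin.cons_succ, Function.comp_apply, Fin.succ_pred]
      · -- right inverse
        intro κ hκ
        funext j
        simp [Fin.cons_succ]
      · -- terms agree
        intro ι hι
        have hι' := hι
        rw [Finset.mem_filter, Finset.mem_filter] at hι'
        obtain ⟨⟨-, hadm⟩, h0⟩ := hι'
        rw [Fin.prod_univ_succ]
        congr 1
        · rw [h0]
          simpa [List.get_eq_getElem] using letterEval_pos a (hs 0)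
        · refine Finset.prod_congr rfl fun j _ => ?_
          congr 1
          rw [← hget, Fin.succ_pred]
    have hterm2 :
        ∑ ι ∈ (Finset.univ.filter
            (fun ι : Fin (n + 1) → Fin (L'.length + 1) => AdmS ι)).filter
            (fun ι => ¬ι 0 = 0),
          ∏ j, letterEval R (((a, true) :: L').get (ι j)) (hs j)
        = ∑ κ ∈ Finset.univ.filter (fun κ : Fin (n + 1) → Fin L'.length => AdmS κ),
            ∏ j, letterEval R (L'.get (κ j)) (hs j) := by
      refine Finset.sum_bij'
        (i := fun ι hι => fun j => (ι j).pred (key2 ι hι j))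
        (j := fun κ _ => Fin.succ ∘ κ) ?_ ?_ ?_ ?_ ?_
      · intro ι hι
        have hι' := hι
        rw [Finset.mem_filter, Finset.mem_filter] at hι'
        obtain ⟨⟨-, hadm⟩, h0⟩ := hι'
        rw [Finset.mem_filter]
        refine ⟨Finset.mem_univ _, fun j i hji => ?_⟩
        rw [Fin.pred_lt_pred_iff]
        exact hadm j i hji
      · intro κ hκ
        rw [Finset.mem_filter] at hκ
        obtain ⟨-, hadm⟩ := hκ
        rw [Finset.mem_filter, Finset.mem_filter]
        exact ⟨⟨Finset.mem_univ _, fun j i hji =>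
          Fin.succ_lt_succ_iff.2 (hadm j i hji)⟩, by simp [Fin.succ_ne_zero]⟩
      · intro ι hι
        funext j
        simp [Fin.succ_pred]
      · intro κ hκ
        funext j
        simp [Fin.pred_succ]
      · intro ι hι
        refine Finset.prod_congr rfl fun j _ => ?_
        congr 1
        rw [← hget, Fin.succ_pred]
    rw [hterm1, hterm2, ← Finset.mul_sum, admS_sum L' hpos' (n + 1) hs,
      admS_sum L' hpos' n (fun j => hs j.succ), List.map_cons, brd_succ_cons]
    ring
  termination_by L _ n => (n, L.length)

open Classical in
lemma lbPure_pw (n : ℕ) (hs : Fin n → S → R) (l : List S) :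
    lbPure hs (pw l) = brd n hs l := by
  unfold lbPure
  rw [toWord_pw]
  have hpos : ∀ p ∈ l.map fun s => (s, true), p.2 = true := by
    intro p hp
    obtain ⟨s, -, rfl⟩ := List.mem_map.1 hp
    rfl
  rw [Finset.filter_congr fun ι _ => adm_iff hpos ι, admS_sum _ hpos n hs]
  congr 1
  rw [List.map_map]
  have e : (Prod.fst ∘ fun s : S => (s, true)) = id := rfl
  rw [e, List.map_id]

lemma lbPure_zero (hs : Fin 0 → S → R) (w : FreeGroup S) : lbPure hs w = 1 := by
  have : (1 : FreeGroup S) = pw [] := pw_nil.symm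
  classical
  unfold lbPure
  have hA : ∀ ι : Fin 0 → Fin w.toWord.length, Admissible w.toWord ι :=
    fun ι j i h => j.elim0
  rw [Finset.filter_true_of_mem fun ι _ => hA ι]
  simp

lemma linExt_apply (f : FreeGroup S → R) (x : MonoidAlgebra R (FreeGroup S)) :
    linExt f x = ∑ g ∈ x.coeff.support, x.coeff g * f g := by
  show Finsupp.linearCombination R f x.coeff = _
  rw [Finsupp.linearCombination_apply]
  rfl

lemma linExt_congr {f f' : FreeGroup S → R} {x : MonoidAlgebra R (FreeGroup S)}
    (h : ∀ g ∈ x.coeff.support, f g = f' g) : linExt f x = linExt f' x := by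
  rw [linExt_apply, linExt_apply]
  exact Finset.sum_congr rfl fun g hg => by rw [h g hg]

lemma linExt_of_mul (f : FreeGroup S → R) (g : FreeGroup S)
    (x : MonoidAlgebra R (FreeGroup S)) :
    linExt f (MonoidAlgebra.of R (FreeGroup S) g * x) =
      linExt (fun h => f (g * h)) x := by
  induction x using MonoidAlgebra.induction_linear with
  | zero => simp
  | add x y hx hy => rw [mul_add, map_add, map_add, hx, hy]
  | single h r =>
    have e : MonoidAlgebra.of R (FreeGroup S) g * (MonoidAlgebra.single h r)
        = (MonoidAlgebra.single (g * h) r : MonoidAlgebra R (FreeGroup S)) := by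
      rw [MonoidAlgebra.of_apply]
      exact (MonoidAlgebra.single_mul_single ..).trans (by rw [one_mul])
    show linExt f (MonoidAlgebra.of R (FreeGroup S) g * MonoidAlgebra.single h r)
        = linExt (fun h' => f (g * h')) (MonoidAlgebra.single h r)
    rw [e]
    show Finsupp.linearCombination R f (MonoidAlgebra.single (g * h) r).coeff
      = Finsupp.linearCombination R (fun h => f (g * h)) (MonoidAlgebra.single h r).coeff
    rw [MonoidAlgebra.coeff_single, MonoidAlgebra.coeff_single, Finsupp.linearCombination_single, Finsupp.linearCombination_single]

/-- all elements of the support are positive words -/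
def Pos (x : MonoidAlgebra R (FreeGroup S)) : Prop :=
  ∀ g ∈ x.coeff.support, ∃ l : List S, g = pw l

lemma pos_one : Pos (1 : MonoidAlgebra R (FreeGroup S)) := by
  intro g hg
  rw [MonoidAlgebra.one_def, MonoidAlgebra.coeff_single] at hg
  have := Finsupp.support_single_subset hg
  simp only [Finset.mem_singleton] at this
  exact ⟨[], by rw [this, pw_nil]⟩

lemma pos_step (a : S) {x : MonoidAlgebra R (FreeGroup S)} (hx : Pos x) :
    Pos ((MonoidAlgebra.of R (FreeGroup S) (FreeGroup.of a) - 1) * x) := by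
  classical
  intro g hg
  rw [sub_mul, one_mul, MonoidAlgebra.coeff_sub] at hg
  rcases Finset.mem_union.1 (Finsupp.support_sub hg) with h | h
  · have h2 := MonoidAlgebra.support_coeff_single_mul_subset x (1 : R) (FreeGroup.of a)
      (by simpa [MonoidAlgebra.of_apply] using h)
    obtain ⟨g', hg', rfl⟩ := Finset.mem_image.1 h2
    obtain ⟨l, rfl⟩ := hx g' hg'
    exact ⟨a :: l, (of_mul_pw a l).symm⟩
  · exact hx g h

lemma pos_prod (l : List S) :
    Pos ((l.map fun s =>
      (MonoidAlgebra.of R (FreeGroup S) (FreeGroup.of s) - 1)).prod) := by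
  induction l with
  | nil => simpa using pos_one
  | cons a l ih =>
    rw [List.map_cons, List.prod_cons]
    exact pos_step a ih

lemma step_zero (hs : Fin 0 → S → R) (a : S) (x : MonoidAlgebra R (FreeGroup S)) :
    linExt (lbPure hs)
      ((MonoidAlgebra.of R (FreeGroup S) (FreeGroup.of a) - 1) * x) = 0 := by
  rw [sub_mul, one_mul, map_sub, linExt_of_mul]
  simp [linExt_apply, lbPure_zero]

lemma step_succ {n : ℕ} (hs : Fin (n + 1) → S → R) (a : S)
    {x : MonoidAlgebra R (FreeGroup S)} (hx : Pos x) :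
    linExt (lbPure hs)
        ((MonoidAlgebra.of R (FreeGroup S) (FreeGroup.of a) - 1) * x)
      = hs 0 a * linExt (lbPure fun j => hs j.succ) x := by
  rw [sub_mul, one_mul, map_sub, linExt_of_mul]
  have h1 : ∀ g ∈ x.coeff.support,
      lbPure hs (FreeGroup.of a * g)
        = lbPure hs g + hs 0 a * lbPure (fun j => hs j.succ) g := by
    intro g hg
    obtain ⟨l, rfl⟩ := hx g hg
    rw [of_mul_pw, lbPure_pw, lbPure_pw, lbPure_pw, brd_succ_cons]
  rw [linExt_congr h1, linExt_apply, linExt_apply, linExt_apply, Finset.mul_sum]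
  rw [← Finset.sum_sub_distrib]
  congr 1
  funext g
  ring

lemma main_list : ∀ (l : List S) (n : ℕ) (hs : Fin n → S → R),
    linExt (lbPure hs)
        ((l.map fun s =>
          (MonoidAlgebra.of R (FreeGroup S) (FreeGroup.of s) - 1)).prod)
      = if h : l.length = n then ∏ i : Fin l.length, hs (Fin.cast h i) (l.get i)
        else 0 := by
  intro l
  induction l with
  | nil =>
    intro n hs
    rw [List.map_nil, List.prod_nil, MonoidAlgebra.one_def]
    have e : linExt (lbPure hs) (MonoidAlgebra.single (1 : FreeGroup S) (1 : R))
        = lbPure hs 1 := by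
      show Finsupp.linearCombination R (lbPure hs) (MonoidAlgebra.single 1 1).coeff = _
      rw [MonoidAlgebra.coeff_single, Finsupp.linearCombination_single, one_smul]
    rw [e, ← pw_nil, lbPure_pw]
    cases n with
    | zero => simp [brd_zero]
    | succ n => simp [brd_succ_nil]
  | cons a l ih =>
    intro n hs
    rw [List.map_cons, List.prod_cons]
    cases n with
    | zero =>
      rw [step_zero]
      simp
    | succ n =>
      rw [step_succ hs a (pos_prod l), ih n fun j => hs j.succ]
      by_cases h : l.length = n
      · rw [dif_pos h, dif_pos (show (a :: l).length = n + 1 by simp [h])]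
        show hs 0 a * ∏ i : Fin l.length, hs (Fin.cast h i).succ (l.get i)
          = ∏ i : Fin (l.length + 1),
              hs (Fin.cast (show l.length + 1 = n + 1 by simp [h]) i) ((a :: l).get i)
        rw [Fin.prod_univ_succ]
        have e1 : Fin.cast (show l.length + 1 = n + 1 by simp [h])
            (0 : Fin (l.length + 1)) = (0 : Fin (n + 1)) := by
          ext; simp
        have e0 : (a :: l).get (0 : Fin (l.length + 1)) = a := by
          simp [List.get_eq_getElem]
        rw [e1, e0]
        congr 1
      · rw [dif_neg h, dif_neg (by simp [h]), mul_zero]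

end LBAux

/-- Letter-braiding evaluated on products `(s₁-1)⋯(s_k-1)` of generators in the group
ring: it gives `h₁(s₁)⋯hₙ(sₙ)` when `k = n` and `0` otherwise. -/
theorem letterBraiding_on_products (R S : Type*) [CommRing R] [DecidableEq S]
    (n k : ℕ) (hs : Fin n → S → R) (s : Fin k → S) :
    linExt (lbPure hs)
        ((List.ofFn fun i =>
          (MonoidAlgebra.of R (FreeGroup S) (FreeGroup.of (s i)) :
            MonoidAlgebra R (FreeGroup S)) - 1).prod) =
      if hkn : k = n then ∏ i : Fin k, hs (Fin.cast hkn i) (s i) else 0 := by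
  classical
  have H := LBAux.main_list (R := R) (S := S) (List.ofFn s) n hs
  rw [List.map_ofFn] at H
  have hc : ((fun t => (MonoidAlgebra.of R (FreeGroup S) (FreeGroup.of t) - 1)) ∘ s)
      = fun i => (MonoidAlgebra.of R (FreeGroup S) (FreeGroup.of (s i)) - 1) := rfl
  rw [hc] at H
  rw [H]
  have hl : (List.ofFn s).length = k := List.length_ofFn
  by_cases hkn : k = n
  · rw [dif_pos (hl.trans hkn), dif_pos hkn]
    refine Finset.prod_nbij' (fun i => Fin.cast hl i) (fun i => Fin.cast hl.symm i)
      (fun _ _ => Finset.mem_univ _) (fun _ _ => Finset.mem_univ _)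
      (fun i _ => by ext; simp) (fun i _ => by ext; simp) (fun i _ => ?_)
    rw [List.get_ofFn]
    congr 1
  · rw [dif_neg (fun hh => hkn (hl.symm.trans hh)), dif_neg hkn]
end

section
/- Let F be the free group on a finite set S, and let T, T' be elements of the tensor algebra T(R^S) (where R^S is the module of functions S → R) whose letter-braiding functions on F agree: I_T(w) = I_{T'}(w) for all w ∈ F. Then T = T'. (Uniqueness of letter-braiding representatives.) -/
open scoped TensorProduct DirectSum

/-! ### Auxiliary lemmas -/

section Aux

variable {R S : Type*} [CommRing R] [DecidableEq S]

open PiTensorProduct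

/-- Evaluation of a tensor power of functionals at a tuple of points of `S`. -/
noncomputable def evAt {n : ℕ} (s : Fin n → S) : (⨂[R]^n (S → R)) →ₗ[R] R :=
  PiTensorProduct.lift ((MultilinearMap.mkPiAlgebra R (Fin n) R).compLinearMap
    (fun j => LinearMap.proj (s j)))

lemma evAt_inj [Fintype S] {n : ℕ} (t : ⨂[R]^n (S → R))
    (h : ∀ s : Fin n → S, evAt (R := R) s t = 0) : t = 0 := by
  classical
  set E : (⨂[R]^n (S → R)) →ₗ[R] ((Fin n → S) → R) :=
    LinearMap.pi (fun s => evAt s) with hEdef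
  set G : ((Fin n → S) → R) →ₗ[R] (⨂[R]^n (S → R)) :=
    ∑ a : Fin n → S, LinearMap.smulRight (LinearMap.proj a)
      (PiTensorProduct.tprod R (fun j : Fin n => (Pi.single (a j) (1 : R) : S → R))) with hGdef
  have hGE : G.comp E = LinearMap.id := by
    apply PiTensorProduct.ext
    apply MultilinearMap.ext
    intro m
    have hE : E (tprod R m) = fun a : Fin n → S => ∏ j, m j (a j) := by
      funext a
      simp [hEdef, evAt, PiTensorProduct.lift.tprod]
    have hexp : (tprod R (s := fun _ : Fin n => (S → R))) m
        = ∑ a : Fin n → S, (∏ j, m j (a j)) •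
            tprod R (fun j : Fin n => (Pi.single (a j) (1 : R) : S → R)) := by
      have h1 : m = fun j => ∑ a : S, Pi.single a (m j a) := by
        funext j; rw [Finset.univ_sum_single]
      conv_lhs => rw [h1]
      rw [MultilinearMap.map_sum]
      refine Finset.sum_congr rfl fun a _ => ?_
      have h2 : (fun j : Fin n => (Pi.single (a j) (m j (a j)) : S → R))
          = fun j : Fin n => (m j (a j)) • (Pi.single (a j) (1 : R) : S → R) := by
        funext j
        rw [← Pi.single_smul, smul_eq_mul, mul_one]
      rw [h2, MultilinearMap.map_smul_univ]
    simp only [LinearMap.compMultilinearMap_apply, LinearMap.comp_apply, LinearMap.id_apply]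
    rw [hE, hGdef]
    simp only [LinearMap.sum_apply, LinearMap.smulRight_apply, LinearMap.proj_apply]
    exact hexp.symm
  have hEt : E t = 0 := funext fun s => h s
  calc t = (G.comp E) t := by rw [hGE]; rfl
  _ = G (E t) := rfl
  _ = 0 := by rw [hEt, map_zero]

lemma reduce_pos (L : List (S × Bool)) (h : ∀ p ∈ L, p.2 = true) :
    FreeGroup.reduce L = L := by
  induction L with
  | nil => simp
  | cons x L ih =>
    rw [FreeGroup.reduce.cons, ih (fun p hp => h p (List.mem_cons_of_mem _ hp))]
    cases L with
    | nil => rfl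
    | cons y L' =>
      have hx : x.2 = true := h x (by simp)
      have hy : y.2 = true := h y (by simp)
      show (if x.1 = y.1 ∧ x.2 = !y.2 then L' else x :: y :: L') = x :: y :: L'
      rw [if_neg]
      rintro ⟨-, h2⟩
      rw [hx, hy] at h2
      simp at h2

lemma adm_strictMono {L : List (S × Bool)} (hL : ∀ p ∈ L, p.2 = true) {m : ℕ}
    {ι : Fin m → Fin L.length} (hι : Admissible L ι) : StrictMono ι := by
  have step : ∀ (j i : Fin m), (i : ℕ) = (j : ℕ) + 1 → ι j < ι i := by
    intro j i hij
    have h2 := hι j i hij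
    rwa [if_pos (by rw [hL _ (List.get_mem L _)])] at h2
  intro a b hab
  have hab' : (a : ℕ) < (b : ℕ) := hab
  have key : ∀ d, ∀ b : Fin m, (b : ℕ) = (a : ℕ) + d + 1 → ι a < ι b := by
    intro d
    induction d with
    | zero => intro b hd; exact step a b (by omega)
    | succ d ih =>
      intro b hd
      have hb1 : (b : ℕ) - 1 < m := by have := b.isLt; omega
      have h1 : ι a < ι ⟨(b : ℕ) - 1, hb1⟩ := ih ⟨(b : ℕ) - 1, hb1⟩ (by simp; omega)
      exact lt_trans h1 (step ⟨(b : ℕ) - 1, hb1⟩ b (by simp; omega))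
  exact key ((b : ℕ) - (a : ℕ) - 1) b (by omega)

open Classical in
lemma filter_adm_empty {L : List (S × Bool)} (hL : ∀ p ∈ L, p.2 = true) {m : ℕ}
    (hm : L.length < m) :
    Finset.univ.filter (fun ι : Fin m → Fin L.length => Admissible L ι) = ∅ := by
  refine Finset.eq_empty_of_forall_notMem fun ι hι => ?_
  rw [Finset.mem_filter] at hι
  have hinj : Function.Injective ι := (adm_strictMono hL hι.2).injective
  have := Fintype.card_le_of_injective ι hinj
  simp at this
  omega

open Classical in
lemma filter_adm_singleton {L : List (S × Bool)} (hL : ∀ p ∈ L, p.2 = true) {n : ℕ}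
    (hlen : L.length = n) :
    Finset.univ.filter (fun ι : Fin n → Fin L.length => Admissible L ι) =
      {fun j => Fin.cast hlen.symm j} := by
  ext ι
  simp only [Finset.mem_filter, Finset.mem_univ, true_and, Finset.mem_singleton]
  constructor
  · intro hι
    have hsm : StrictMono ι := adm_strictMono hL hι
    have hsm2 : StrictMono (fun j => Fin.cast hlen (ι j)) :=
      (Fin.cast_strictMono hlen).comp hsm
    set f : Fin n → Fin n := fun j => Fin.cast hlen (ι j) with hfdef
    have hge : ∀ k, ∀ j : Fin n, (j : ℕ) = k → (j : ℕ) ≤ (f j : ℕ) := by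
      intro k
      induction k with
      | zero => intro j hj; omega
      | succ k ih =>
        intro j hj
        have hk : k < n := by have := j.isLt; omega
        have h1 : (⟨k, hk⟩ : Fin n) < j := by
          rw [Fin.lt_iff_val_lt_val]; simp; omega
        have h2 : (f ⟨k, hk⟩ : ℕ) < (f j : ℕ) := Fin.lt_iff_val_lt_val.mp (hsm2 h1)
        have h3 := ih ⟨k, hk⟩ rfl
        simp only at h3
        omega
    have hle : ∀ k, ∀ j : Fin n, n - 1 - (j : ℕ) = k → (f j : ℕ) ≤ (j : ℕ) := by
      intro k
      induction k with
      | zero =>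
        intro j hj
        have := (f j).isLt
        have := j.isLt
        omega
      | succ k ih =>
        intro j hj
        have hk : (j : ℕ) + 1 < n := by have := j.isLt; omega
        have h1 : j < (⟨(j : ℕ) + 1, hk⟩ : Fin n) := by
          rw [Fin.lt_iff_val_lt_val]; simp
        have h2 : (f j : ℕ) < (f ⟨(j : ℕ) + 1, hk⟩ : ℕ) := Fin.lt_iff_val_lt_val.mp (hsm2 h1)
        have h3 := ih ⟨(j : ℕ) + 1, hk⟩ (by simp; omega)
        simp only at h3
        omega
    funext j
    have heq : f j = j := by
      have g1 := hge (j : ℕ) j rfl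
      have g2 := hle (n - 1 - (j : ℕ)) j rfl
      exact Fin.ext (by omega)
    have := congrArg (Fin.cast hlen.symm) heq
    simpa [hfdef] using this
  · rintro rfl
    intro j i hij
    have hget : (L.get (Fin.cast hlen.symm j)).2 = true := hL _ (List.get_mem L _)
    rw [if_pos (by rw [hget])]
    simp only [Fin.lt_iff_val_lt_val, Fin.coe_cast]
    omega

open Classical in
lemma lift_lbMulti_apply (m : ℕ) (t : ⨂[R]^m (S → R)) (w : FreeGroup S) :
    PiTensorProduct.lift (lbMulti R S m) t w =
      ∑ ι ∈ Finset.univ.filter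
          (fun ι : Fin m → Fin w.toWord.length => Admissible w.toWord ι),
        PiTensorProduct.lift ((MultilinearMap.mkPiAlgebra R (Fin m) R).compLinearMap
          (fun j => letterEval R (w.toWord.get (ι j)))) t := by
  induction t using PiTensorProduct.induction_on with
  | smul_tprod r h =>
    simp only [map_smul, PiTensorProduct.lift.tprod, Pi.smul_apply, smul_eq_mul,
      Finset.mul_sum, lbMulti, MultilinearMap.pi_apply, MultilinearMap.sum_apply,
      Finset.smul_sum]
  | add x y hx hy =>
    simp only [map_add, Pi.add_apply, hx, hy, Finset.sum_add_distrib]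

/-- The positive word associated to a tuple `s : Fin n → S`. -/
noncomputable def posWord {n : ℕ} (s : Fin n → S) : FreeGroup S :=
  FreeGroup.mk (List.ofFn fun j => (s j, true))

lemma posWord_toWord {n : ℕ} (s : Fin n → S) :
    (posWord s).toWord = List.ofFn (fun j => (s j, true)) := by
  rw [posWord, FreeGroup.toWord_mk]
  apply reduce_pos
  intro p hp
  rw [List.mem_ofFn] at hp
  obtain ⟨j, rfl⟩ := hp
  rfl

lemma posWord_pos {n : ℕ} (s : Fin n → S) :
    ∀ p ∈ (List.ofFn fun j => (s j, true)), p.2 = true := by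
  intro p hp
  rw [List.mem_ofFn] at hp
  obtain ⟨j, rfl⟩ := hp
  rfl

lemma lift_lbMulti_posWord_gt {n m : ℕ} (hm : n < m) (s : Fin n → S)
    (t : ⨂[R]^m (S → R)) :
    PiTensorProduct.lift (lbMulti R S m) t (posWord s) = 0 := by
  classical
  rw [lift_lbMulti_apply, posWord_toWord]
  rw [show (Finset.univ.filter
      (fun ι : Fin m → Fin (List.ofFn fun j => (s j, true)).length =>
        Admissible (List.ofFn fun j => (s j, true)) ι)) = ∅ from
    filter_adm_empty (posWord_pos s) (by simpa using hm)]
  simp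

lemma lift_lbMulti_posWord_eq {n : ℕ} (s : Fin n → S) (t : ⨂[R]^n (S → R)) :
    PiTensorProduct.lift (lbMulti R S n) t (posWord s) = evAt (R := R) s t := by
  classical
  rw [lift_lbMulti_apply, posWord_toWord]
  have hlen : (List.ofFn fun j => (s j, true)).length = n := by simp
  rw [show (Finset.univ.filter
      (fun ι : Fin n → Fin (List.ofFn fun j => (s j, true)).length =>
        Admissible (List.ofFn fun j => (s j, true)) ι)) =
      {fun j => Fin.cast hlen.symm j} from filter_adm_singleton (posWord_pos s) hlen]
  rw [Finset.sum_singleton, evAt]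
  have hget : ∀ j : Fin n,
      (List.ofFn fun j => (s j, true)).get (Fin.cast hlen.symm j) = (s j, true) := by
    intro j
    have harg : ∀ (hh : (List.ofFn fun j => (s j, true)).length = n),
        Fin.cast hh (Fin.cast hlen.symm j) = j := fun hh => by ext; simp
    rw [List.get_ofFn, harg]
  simp only [hget]
  simp [letterEval]

lemma LB_of_apply {m : ℕ} (t : ⨂[R]^m (S → R)) :
    LB R S (DirectSum.of (fun n : ℕ => ⨂[R]^n (S → R)) m t)
      = PiTensorProduct.lift (lbMulti R S m) t := by
  rw [LB, ← DirectSum.lof_eq_of R, DirectSum.toModule_lof]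

end Aux

/-- Uniqueness of letter-braiding representatives: for a finite set `S`, two tensors in
`T(R^S)` with the same letter-braiding function on the free group `F_S` are equal;
i.e. `T ↦ I_T` is injective. -/
theorem letterBraiding_injective (R S : Type*) [CommRing R] [Fintype S] [DecidableEq S]
    (T T' : ⨁ n : ℕ, ⨂[R]^n (S → R))
    (h : ∀ w : FreeGroup S, LB R S T w = LB R S T' w) :
    T = T' := by
  classical
  suffices hzero : ∀ (U : ⨁ n : ℕ, ⨂[R]^n (S → R)),
      (∀ w : FreeGroup S, LB R S U w = 0) → U = 0 by
    have := hzero (T - T') (fun w => by rw [map_sub]; simp [h w])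
    exact sub_eq_zero.mp this
  intro U hU
  have key : ∀ n, U n = 0 := by
    intro n
    induction n using Nat.strong_induction_on with
    | _ n ih =>
    have hsum : ∀ w : FreeGroup S,
        ∑ m ∈ DFinsupp.support U, (PiTensorProduct.lift (lbMulti R S m) (U m)) w = 0 := by
      intro w
      have h0 := hU w
      conv_lhs at h0 => rw [← DirectSum.sum_support_of U]
      rw [map_sum] at h0
      have : (∑ m ∈ DFinsupp.support U,
          LB R S (DirectSum.of (fun n : ℕ => ⨂[R]^n (S → R)) m (U m))) w = 0 := h0
      rw [Finset.sum_apply] at this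
      simpa only [LB_of_apply] using this
    have hev : ∀ s : Fin n → S, evAt (R := R) s (U n) = 0 := by
      intro s
      have h1 := hsum (posWord s)
      rw [Finset.sum_eq_single n] at h1
      · rwa [lift_lbMulti_posWord_eq] at h1
      · intro b hb hbn
        rcases lt_or_gt_of_ne hbn with hlt | hgt
        · rw [ih b hlt, map_zero]; rfl
        · exact lift_lbMulti_posWord_gt hgt s (U b)
      · intro hn
        rw [DFinsupp.notMem_support_iff.mp hn, map_zero]
        rfl
    exact evAt_inj (U n) hev
  exact DFinsupp.ext key
end

section
/- Let F be the free group on a set S and T an element of the tensor algebra T(R^S). If the letter-braiding function I_T : F → R is conjugation-invariant, then I_T((s_1-1)⋯(s_k-1)) = I_T((s_2-1)⋯(s_k-1)(s_1-1)) for all s_1, …, s_k ∈ S. -/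
open scoped TensorProduct DirectSum

lemma linExt_of {R S : Type*} [CommRing R] (f : FreeGroup S → R) (g : FreeGroup S) :
    linExt f (MonoidAlgebra.of R (FreeGroup S) g) = f g := by
  show Finsupp.linearCombination R f (Finsupp.single g 1) = f g
  exact (Finsupp.linearCombination_single R 1 g).trans (one_smul R (f g))

lemma linExt_mul_comm {R S : Type*} [CommRing R] (f : FreeGroup S → R)
    (hf : ∀ g w : FreeGroup S, f (g * w * g⁻¹) = f w)
    (u v : MonoidAlgebra R (FreeGroup S)) :
    linExt f (u * v) = linExt f (v * u) := by
  induction u using MonoidAlgebra.induction_on with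
  | of g =>
    induction v using MonoidAlgebra.induction_on with
    | of h =>
      rw [← map_mul, ← map_mul, linExt_of, linExt_of]
      have := hf g (h * g)
      rwa [show g * (h * g) * g⁻¹ = g * h by group] at this
    | add v₁ v₂ h₁ h₂ => simp only [mul_add, add_mul, map_add, h₁, h₂]
    | smul r v hv => simp only [mul_smul_comm, smul_mul_assoc, map_smul, hv]
  | add u₁ u₂ h₁ h₂ => simp only [mul_add, add_mul, map_add, h₁, h₂]
  | smul r u hu => simp only [mul_smul_comm, smul_mul_assoc, map_smul, hu]

/-- If the letter-braiding function `I_T` of a tensor `T ∈ T(R^S)` is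
conjugation-invariant, then its linear extension to the group ring satisfies
`I_T((s₁-1)(s₂-1)⋯(s_k-1)) = I_T((s₂-1)⋯(s_k-1)(s₁-1))` for all generators `sᵢ ∈ S`. -/
theorem letterBraiding_cyclic_of_classFunction (R S : Type*) [CommRing R] [DecidableEq S]
    (T : ⨁ n : ℕ, ⨂[R]^n (S → R))
    (hinv : ∀ g w : FreeGroup S, LB R S T (g * w * g⁻¹) = LB R S T w)
    (a : S) (l : List S) :
    linExt (LB R S T)
        ((MonoidAlgebra.of R (FreeGroup S) (FreeGroup.of a) - 1) *
          (l.map fun s =>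
            (MonoidAlgebra.of R (FreeGroup S) (FreeGroup.of s) :
              MonoidAlgebra R (FreeGroup S)) - 1).prod) =
      linExt (LB R S T)
        ((l.map fun s =>
            (MonoidAlgebra.of R (FreeGroup S) (FreeGroup.of s) :
              MonoidAlgebra R (FreeGroup S)) - 1).prod *
          (MonoidAlgebra.of R (FreeGroup S) (FreeGroup.of a) - 1)) := by
  exact linExt_mul_comm (LB R S T) hinv _ _
end
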